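/- Any simple closed curve γ : S¹ → ℝ³ whose range Γ satisfies ½(Γ+Γ) = [0,1]³ is not rectifiable; that is, no rectifiable curve γ : [a,b] → ℝ³ has range Γ with ½(Γ+Γ) = [0,1]³. -/

import Mathlib

open Set MeasureTheory Pointwise
open scoped NNReal ENNReal

/-- A unit-speed function is 1-Lipschitz on its set. -/
lemma hasUnitSpeedOn.lipschitzOnWith {E : Type*} [PseudoEMetricSpace E]
    {g : ℝ → E} {T : Set ℝ} (h : HasUnitSpeedOn g T) : LipschitzOnWith 1 g T := by
  have key : ∀ x ∈ T, ∀ y ∈ T, x ≤ y → edist (g x) (g y) ≤ ENNReal.ofReal (y - x) := by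
    intro x hx y hy hxy
    calc edist (g x) (g y)
        ≤ eVariationOn g (T ∩ Set.Icc x y) :=
          eVariationOn.edist_le g ⟨hx, le_refl x, hxy⟩ ⟨hy, hxy, le_refl y⟩
      _ = ENNReal.ofReal (((1 : ℝ≥0) : ℝ) * (y - x)) := h hx hy
      _ = ENNReal.ofReal (y - x) := by norm_num
  intro x hx y hy
  rcases le_total x y with hxy | hxy
  · calc edist (g x) (g y) ≤ ENNReal.ofReal (y - x) := key x hx y hy hxy
      _ ≤ 1 * edist x y := by
          rw [one_mul, edist_dist, Real.dist_eq]
          exact ENNReal.ofReal_le_ofReal (le_abs_self _ |>.trans (by rw [abs_sub_comm]))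
  · calc edist (g x) (g y) = edist (g y) (g x) := edist_comm _ _
      _ ≤ ENNReal.ofReal (x - y) := key y hy x hx hxy
      _ ≤ 1 * edist x y := by
          rw [one_mul, edist_dist, Real.dist_eq]
          exact ENNReal.ofReal_le_ofReal ((le_abs_self _).trans (by rw [abs_sub_comm]))

/-- No rectifiable curve `γ : [a,b] → ℝ³` (continuous with finite total variation) has a
range `Γ` with `½(Γ+Γ) = [0,1]³`; in particular any simple closed curve whose range `Γ`
satisfies `½(Γ+Γ) = [0,1]³` is not rectifiable. -/
theorem stmt_5 (Γ : Set (EuclideanSpace ℝ (Fin 3)))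
    (hΓ : (2⁻¹ : ℝ) • (Γ + Γ) = (WithLp.ofLp ⁻¹' Set.univ.pi (fun _ : Fin 3 => Set.Icc (0 : ℝ) 1) : Set (EuclideanSpace ℝ (Fin 3)))) :
    ¬ ∃ (a b : ℝ) (γ : ℝ → EuclideanSpace ℝ (Fin 3)),
        ContinuousOn γ (Set.Icc a b) ∧ BoundedVariationOn γ (Set.Icc a b) ∧
        γ '' Set.Icc a b = Γ := by
  rintro ⟨a, b, γ, -, hbv, hrange⟩
  set cube : Set (EuclideanSpace ℝ (Fin 3)) :=
    WithLp.ofLp ⁻¹' Set.univ.pi (fun _ : Fin 3 => Set.Icc (0 : ℝ) 1) with hcube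
  -- First: the cube has Hausdorff dimension 3.
  have hdim_cube : (3 : ℝ≥0∞) ≤ dimH cube := by
    set e : (Fin 3 → ℝ) ≃L[ℝ] EuclideanSpace ℝ (Fin 3) :=
      (EuclideanSpace.equiv (Fin 3) ℝ).symm
    have himg : e '' (Set.univ.pi (fun _ : Fin 3 => Set.Icc (0 : ℝ) 1)) = cube := by
      ext y
      constructor
      · rintro ⟨x, hx, rfl⟩; exact hx
      · intro hy; exact ⟨y, hy, rfl⟩
    have hball : Metric.ball (fun _ : Fin 3 => (2⁻¹ : ℝ)) 2⁻¹ ⊆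
        Set.univ.pi (fun _ : Fin 3 => Set.Icc (0 : ℝ) 1) := by
      intro x hx
      intro i _
      have := dist_le_pi_dist x (fun _ : Fin 3 => (2⁻¹ : ℝ)) i
      have hxd : dist (x i) (2⁻¹ : ℝ) < 2⁻¹ := lt_of_le_of_lt this hx
      rw [Real.dist_eq, abs_lt] at hxd
      constructor <;> linarith [hxd.1, hxd.2]
    have h1 : (3 : ℝ≥0∞) ≤ dimH (Set.univ.pi (fun _ : Fin 3 => Set.Icc (0 : ℝ) 1)) := by
      calc (3 : ℝ≥0∞) = dimH (Metric.ball (fun _ : Fin 3 => (2⁻¹ : ℝ)) 2⁻¹) := by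
            rw [Real.dimH_ball_pi_fin _ (by norm_num : (0:ℝ) < 2⁻¹)]; norm_num
        _ ≤ _ := dimH_mono hball
    calc (3 : ℝ≥0∞) ≤ dimH (Set.univ.pi (fun _ : Fin 3 => Set.Icc (0 : ℝ) 1)) := h1
      _ = dimH (e '' (Set.univ.pi (fun _ : Fin 3 => Set.Icc (0 : ℝ) 1))) :=
          (e.dimH_image _).symm
      _ = dimH cube := by rw [himg]
  -- Handle the degenerate empty case.
  by_cases hab : a ≤ b
  swap
  · have he : Set.Icc a b = (∅ : Set ℝ) := Set.Icc_eq_empty hab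
    rw [he, Set.image_empty] at hrange
    rw [← hrange] at hΓ
    simp only [Set.empty_add, Set.smul_set_empty] at hΓ
    have h0 : (0 : EuclideanSpace ℝ (Fin 3)) ∈ cube := by
      intro i _; simp
    rw [← hΓ] at h0
    exact h0
  -- Natural (arclength) parametrization.
  set s : Set ℝ := Set.Icc a b with hs
  have ha : a ∈ s := ⟨le_refl a, hab⟩
  have hlbv : LocallyBoundedVariationOn γ s := hbv.locallyBoundedVariationOn
  set v : ℝ → ℝ := variationOnFromTo γ s a with hv
  set g : ℝ → EuclideanSpace ℝ (Fin 3) := naturalParameterization γ s a with hg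
  set T : Set ℝ := v '' s with hT
  have hunit : HasUnitSpeedOn g T := has_unit_speed_naturalParameterization γ hlbv ha
  have hlip : LipschitzOnWith 1 g T := hasUnitSpeedOn.lipschitzOnWith hunit
  have hgv : ∀ x ∈ s, g (v x) = γ x := by
    intro x hx
    have := edist_naturalParameterization_eq_zero hlbv ha hx
    rwa [edist_eq_zero] at this
  have hgT : g '' T = Γ := by
    rw [hT, Set.image_image, ← hrange]
    exact Set.image_congr hgv
  -- The sum set is the Lipschitz image of T ×ˢ T ⊆ ℝ².
  set F : ℝ × ℝ → EuclideanSpace ℝ (Fin 3) := fun p => g p.1 + g p.2 with hF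
  have hFimg : F '' (T ×ˢ T) = Γ + Γ := by
    ext z
    constructor
    · rintro ⟨⟨x, y⟩, ⟨hx, hy⟩, rfl⟩
      exact Set.add_mem_add (hgT ▸ Set.mem_image_of_mem g hx)
        (hgT ▸ Set.mem_image_of_mem g hy)
    · intro hz
      rcases Set.mem_add.mp hz with ⟨u, hu, w, hw, rfl⟩
      rw [← hgT] at hu hw
      rcases hu with ⟨x, hx, rfl⟩
      rcases hw with ⟨y, hy, rfl⟩
      exact ⟨(x, y), ⟨hx, hy⟩, rfl⟩
  have hFlip : LipschitzOnWith 2 F (T ×ˢ T) := by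
    intro p hp q hq
    calc edist (F p) (F q) ≤ edist (g p.1) (g q.1) + edist (g p.2) (g q.2) :=
          edist_add_add_le _ _ _ _
      _ ≤ 1 * edist p.1 q.1 + 1 * edist p.2 q.2 :=
          add_le_add (hlip hp.1 hq.1) (hlip hp.2 hq.2)
      _ ≤ 1 * edist p q + 1 * edist p q := by
          gcongr
          · exact le_max_left _ _
          · exact le_max_right _ _
      _ = 2 * edist p q := by ring
  have hdim_sum : dimH (Γ + Γ) ≤ 2 := by
    calc dimH (Γ + Γ) = dimH (F '' (T ×ˢ T)) := by rw [hFimg]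
      _ ≤ dimH (T ×ˢ T) := hFlip.dimH_image_le
      _ ≤ dimH (Set.univ : Set (ℝ × ℝ)) := dimH_mono (Set.subset_univ _)
      _ = Module.finrank ℝ (ℝ × ℝ) := Real.dimH_univ_eq_finrank (ℝ × ℝ)
      _ = 2 := by
          rw [Module.finrank_prod, Module.finrank_self]
          norm_num
  -- Scaling does not increase the dimension.
  have hdim_cube_le : dimH cube ≤ 2 := by
    set L : EuclideanSpace ℝ (Fin 3) →L[ℝ] EuclideanSpace ℝ (Fin 3) :=
      (2⁻¹ : ℝ) • ContinuousLinearMap.id ℝ (EuclideanSpace ℝ (Fin 3)) with hL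
    have himgL : L '' (Γ + Γ) = cube := by
      rw [← hΓ, ← Set.image_smul]
      apply Set.image_congr
      intro x _
      simp [hL]
    calc dimH cube = dimH (L '' (Γ + Γ)) := by rw [himgL]
      _ ≤ dimH (Γ + Γ) := L.lipschitz.dimH_image_le _
      _ ≤ 2 := hdim_sum
  have hfin : (3 : ℝ≥0∞) ≤ 2 := hdim_cube.trans hdim_cube_le
  norm_num at hfin
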